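/- For n ≥ 0 and k ≥ 2, a binary word of length n has exactly k−1 descents after run-sorting if and only if it contains exactly k occurrences of the factor '01'; and the number of binary words of length n containing exactly k occurrences of '01' (k ≥ 2) is C(n, 2k) + C(n, 2k+1). -/

import Mathlib

/-- Lexicographic (≤) comparison of lists of naturals, as a `Bool`. -/
def lexLe : List ℕ → List ℕ → Bool
  | [], _ => true
  | _ :: _, [] => false
  | a :: as, b :: bs => decide (a < b) || (a == b && lexLe as bs)

/-- Split a word into its maximal (weakly) increasing runs. -/
def splitRuns : List ℕ → List (List ℕ)
  | [] => []
  | [x] => [[x]]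
  | x :: y :: rest =>
    match splitRuns (y :: rest) with
    | [] => [[x]]
    | r :: rs => if x ≤ y then (x :: r) :: rs else [x] :: r :: rs

/-- Rearrange the maximal increasing runs of a word in lexicographic order. -/
def runsort (w : List ℕ) : List ℕ := ((splitRuns w).mergeSort lexLe).flatten

/-- A word is run-sorted if its runs already appear in lexicographic order. -/
def IsRunSorted (w : List ℕ) : Prop := runsort w = w

instance : DecidablePred IsRunSorted := fun w => inferInstanceAs (Decidable (runsort w = w))

/-- The number of descents of a word: positions k (0-indexed) with w(k) > w(k+1). -/
def des (w : List ℕ) : ℕ := ((w.zip w.tail).filter fun p => decide (p.2 < p.1)).length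

/-- The one-line notation word (with values 1,…,n) of a permutation of `Fin n`. -/
def permWord {n : ℕ} (σ : Equiv.Perm (Fin n)) : List ℕ := List.ofFn fun i => (σ i : ℕ) + 1

/-- The word (list of 0s and 1s) corresponding to a binary word on `Fin n`. -/
def word {n : ℕ} (w : Fin n → Fin 2) : List ℕ := List.ofFn fun i => (w i : ℕ)

/-- The number of occurrences of the factor `01` in a word. -/
def occ01 (w : List ℕ) : ℕ := ((w.zip w.tail).filter fun p => p.1 == 0 && p.2 == 1).length



section Aux18

lemma lexLe_trans : ∀ a b c : List ℕ, lexLe a b → lexLe b c → lexLe a c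
  | [], _, _, _, _ => rfl
  | _ :: _, [], _, h, _ => by simp [lexLe] at h
  | _ :: _, _ :: _, [], _, h => by simp [lexLe] at h
  | a :: as, b :: bs, c :: cs, h1, h2 => by
      simp only [lexLe, Bool.or_eq_true, Bool.and_eq_true, decide_eq_true_eq,
        beq_iff_eq] at h1 h2 ⊢
      rcases h1 with h1 | ⟨rfl, h1⟩ <;> rcases h2 with h2 | ⟨rfl, h2⟩
      · exact Or.inl (h1.trans h2)
      · exact Or.inl h1
      · exact Or.inl h2
      · exact Or.inr ⟨rfl, lexLe_trans _ _ _ h1 h2⟩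

lemma lexLe_total : ∀ a b : List ℕ, (lexLe a b || lexLe b a) = true
  | [], _ => by simp [lexLe]
  | _ :: _, [] => by simp [lexLe]
  | a :: as, b :: bs => by
      have ih := lexLe_total as bs
      simp only [lexLe, Bool.or_eq_true, Bool.and_eq_true, decide_eq_true_eq,
        beq_iff_eq] at ih ⊢
      rcases Nat.lt_trichotomy a b with h | rfl | h
      · exact Or.inl (Or.inl h)
      · rcases ih with h | h
        · exact Or.inl (Or.inr ⟨rfl, h⟩)
        · exact Or.inr (Or.inr ⟨rfl, h⟩)
      · exact Or.inr (Or.inl h)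

lemma splitRuns_cons : ∀ (c : ℕ) (t : List ℕ), ∃ r rs, splitRuns (c :: t) = (c :: r) :: rs
  | c, [] => ⟨[], [], rfl⟩
  | c, y :: rest => by
      obtain ⟨r, rs, h⟩ := splitRuns_cons y rest
      by_cases hcy : c ≤ y
      · exact ⟨y :: r, rs, by simp [splitRuns, h, hcy]⟩
      · exact ⟨[], (y :: r) :: rs, by simp [splitRuns, h, hcy]⟩

lemma flatten_splitRuns : ∀ l : List ℕ, (splitRuns l).flatten = l
  | [] => rfl
  | [x] => rfl
  | x :: y :: rest => by
      have ih := flatten_splitRuns (y :: rest)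
      obtain ⟨r, rs, h⟩ := splitRuns_cons y rest
      rw [h] at ih
      by_cases hxy : x ≤ y <;>
        simp only [splitRuns, h, hxy, if_true, if_false, List.flatten_cons, List.cons_append,
          List.flatten] at ih ⊢ <;> simp_all

def IsRun01 (r : List ℕ) : Prop :=
  ∃ a b, r = List.replicate a 0 ++ List.replicate b 1 ∧ 1 ≤ a + b

lemma isRun01_single {x : ℕ} (hx : x ≤ 1) : IsRun01 [x] := by
  interval_cases x
  · exact ⟨1, 0, rfl, le_refl _⟩
  · exact ⟨0, 1, rfl, le_refl _⟩

lemma isRun_splitRuns : ∀ l : List ℕ, (∀ x ∈ l, x ≤ 1) → ∀ r ∈ splitRuns l, IsRun01 r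
  | [], _, r, hr => by simp [splitRuns] at hr
  | [x], h, r, hr => by
      simp [splitRuns] at hr
      subst hr
      exact isRun01_single (h x (by simp))
  | x :: y :: rest, h, r, hr => by
      have hbin : ∀ z ∈ y :: rest, z ≤ 1 := fun z hz => h z (List.mem_cons_of_mem _ hz)
      have ih := isRun_splitRuns (y :: rest) hbin
      obtain ⟨r0, rs, hsp⟩ := splitRuns_cons y rest
      have hx : x ≤ 1 := h x (by simp)
      have hy : y ≤ 1 := h y (by simp)
      have hrun0 : IsRun01 (y :: r0) := ih _ (by rw [hsp]; exact List.mem_cons_self)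
      by_cases hxy : x ≤ y
      · simp only [splitRuns, hsp, if_pos hxy, List.mem_cons] at hr
        rcases hr with rfl | hr
        · -- r = x :: y :: r0
          obtain ⟨a, b, hab, hab1⟩ := hrun0
          interval_cases x
          · exact ⟨a + 1, b, by simp [List.replicate_succ, hab], by omega⟩
          · -- x = 1, so y = 1, hence a = 0
            have hy1 : y = 1 := le_antisymm hy hxy
            subst hy1
            cases a with
            | zero =>
                refine ⟨0, b + 1, ?_, by omega⟩
                simp only [List.replicate_succ, List.nil_append, List.replicate_zero] at hab ⊢
                rw [← hab]
            | succ a' => simp [List.replicate_succ] at hab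
        · exact ih _ (by rw [hsp]; exact List.mem_cons_of_mem _ hr)
      · simp only [splitRuns, hsp, if_neg hxy, List.mem_cons] at hr
        rcases hr with rfl | hr
        · exact isRun01_single hx
        · exact ih _ (by rw [hsp]; simpa using hr)

lemma occ01_nil : occ01 [] = 0 := rfl
lemma occ01_single (x : ℕ) : occ01 [x] = 0 := rfl

lemma occ01_cons₂ (x y : ℕ) (l : List ℕ) :
    occ01 (x :: y :: l) = (if x = 0 ∧ y = 1 then 1 else 0) + occ01 (y :: l) := by
  simp only [occ01, List.tail_cons, List.zip_cons_cons, List.filter_cons]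
  by_cases h : x = 0 ∧ y = 1
  · obtain ⟨rfl, rfl⟩ := h; simp [Nat.add_comm]
  · have h' : ¬((x == 0 && y == 1) = true) := by simpa using h
    simp [h', h]

lemma occ01_cons (x : ℕ) (l : List ℕ) :
    occ01 (x :: l) = occ01 l + (if x = 0 ∧ l.head? = some 1 then 1 else 0) := by
  cases l with
  | nil => simp [occ01_single, occ01_nil]
  | cons y t =>
      rw [occ01_cons₂]
      simp only [List.head?_cons, Option.some.injEq]
      omega
      
lemma des_nil : des [] = 0 := rfl
lemma des_single (x : ℕ) : des [x] = 0 := rfl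

lemma des_cons₂ (x y : ℕ) (l : List ℕ) :
    des (x :: y :: l) = (if y < x then 1 else 0) + des (y :: l) := by
  simp only [des, List.tail_cons, List.zip_cons_cons, List.filter_cons]
  by_cases h : y < x
  · simp [h, Nat.add_comm]
  · simp [h]

def jn : Option ℕ → Option ℕ → ℕ
  | some x, some y => if y < x then 1 else 0
  | _, _ => 0

lemma des_cons (x : ℕ) (l : List ℕ) : des (x :: l) = jn (some x) l.head? + des l := by
  cases l with
  | nil => simp [des_single, des_nil, jn]
  | cons y t => rw [des_cons₂]; simp [jn]

lemma des_append : ∀ l m : List ℕ, des (l ++ m) = des l + des m + jn l.getLast? m.head?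
  | [], m => by cases m <;> simp [des_nil, jn]
  | x :: l, m => by
      rw [List.cons_append, des_cons, des_append l m, des_cons]
      cases l with
      | nil => simp [des_nil, jn]; cases m <;> simp [jn] <;> omega
      | cons y t =>
          simp only [List.head?_cons, List.cons_append, List.getLast?_cons_cons]
          omega

def mixedb (r : List ℕ) : Bool := decide (0 ∈ r ∧ 1 ∈ r)

lemma getLast?_replicate (a x : ℕ) :
    (List.replicate a x).getLast? = if a = 0 then none else some x := by
  induction a with
  | zero => simp
  | succ a ih =>
      cases a with
      | zero => simp
      | succ a' =>
          rw [List.replicate_succ, List.replicate_succ, List.getLast?_cons_cons,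
            ← List.replicate_succ]
          simpa using ih

lemma des_replicate (a x : ℕ) : des (List.replicate a x) = 0 := by
  induction a with
  | zero => exact des_nil
  | succ a ih =>
      rw [List.replicate_succ, des_cons, ih]
      cases a <;> simp [jn, List.head?_replicate]

lemma run_head {r : List ℕ} (h : IsRun01 r) :
    r.head? = some (if 0 ∈ r then 0 else 1) := by
  obtain ⟨a, b, rfl, hab⟩ := h
  cases a with
  | zero =>
      cases b with
      | zero => omega
      | succ b' => simp [List.replicate_succ, List.mem_replicate]
  | succ a' => simp [List.replicate_succ]

lemma run_getLast {r : List ℕ} (h : IsRun01 r) :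
    r.getLast? = some (if 1 ∈ r then 1 else 0) := by
  obtain ⟨a, b, rfl, hab⟩ := h
  cases b with
  | zero =>
      cases a with
      | zero => omega
      | succ a' =>
          simp only [List.replicate_zero, List.append_nil, getLast?_replicate,
            List.mem_append, List.mem_replicate]
          simp
  | succ b' =>
      rw [List.getLast?_append]
      simp [getLast?_replicate, List.mem_append, List.mem_replicate]

lemma des_run {r : List ℕ} (h : IsRun01 r) : des r = 0 := by
  obtain ⟨a, b, rfl, hab⟩ := h
  rw [des_append, des_replicate, des_replicate, getLast?_replicate]
  cases a with
  | zero => simp [jn]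
  | succ a' =>
      cases b with
      | zero => simp [jn]
      | succ b' => simp [jn, List.head?_replicate]

lemma run_ne_nil {r : List ℕ} (h : IsRun01 r) : r ≠ [] := by
  obtain ⟨a, b, rfl, hab⟩ := h
  cases a <;> cases b <;> simp_all [List.replicate_succ]

lemma lexLe_one_zero (xs ys : List ℕ) : lexLe (1 :: xs) (0 :: ys) = false := by
  simp [lexLe]

lemma lexLe_mixed_zeros : ∀ (a c : ℕ) (xs : List ℕ),
    lexLe (List.replicate a 0 ++ 1 :: xs) (List.replicate c 0) = false
  | 0, 0, xs => rfl
  | 0, c + 1, xs => by simp [List.replicate_succ, lexLe]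
  | a + 1, 0, xs => rfl
  | a + 1, c + 1, xs => by
      simp only [List.replicate_succ, List.cons_append, lexLe]
      simp [lexLe_mixed_zeros a c xs]

lemma head?_flatten_cons (s : List ℕ) (t : List (List ℕ)) (hs : s ≠ []) :
    (s :: t).flatten.head? = s.head? := by
  cases s with
  | nil => exact absurd rfl hs
  | cons c s' => simp

lemma mixedb_iff {a b : ℕ} :
    mixedb (List.replicate a 0 ++ List.replicate b 1) = true ↔ a ≠ 0 ∧ b ≠ 0 := by
  simp [mixedb, List.mem_append, List.mem_replicate]

lemma after_one {r u : List ℕ} (hr1 : r.head? = some 1) (hu : IsRun01 u)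
    (hle : lexLe r u = true) : mixedb u = false ∧ u.head? = some 1 := by
  obtain ⟨c, d, rfl, hcd⟩ := hu
  cases c with
  | zero =>
      constructor
      · rw [Bool.eq_false_iff]
        intro hmix
        exact absurd (mixedb_iff.mp hmix).1 (by simp)
      · cases d with
        | zero => omega
        | succ d' => simp [List.replicate_succ]
  | succ c' =>
      exfalso
      cases r with
      | nil => simp at hr1
      | cons x r' =>
          simp only [List.head?_cons, Option.some.injEq] at hr1
          subst hr1
          rw [List.replicate_succ, List.cons_append, lexLe_one_zero] at hle
          exact Bool.false_ne_true hle

lemma des_flatten : ∀ rs : List (List ℕ), (∀ r ∈ rs, IsRun01 r) →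
    rs.Pairwise (fun a b => lexLe a b = true) →
    des rs.flatten = rs.countP mixedb - 1
  | [], _, _ => by simp [des_nil]
  | [r], h, _ => by
      simp only [List.flatten_cons, List.flatten_nil, List.append_nil, List.countP_cons,
        List.countP_nil]
      rw [des_run (h r (by simp))]
      cases hm : mixedb r <;> simp [hm]
  | r :: s :: t, h, hp => by
      obtain ⟨hr, hp'⟩ := List.pairwise_cons.mp hp
      obtain ⟨hs1, hp''⟩ := List.pairwise_cons.mp hp'
      have ih := des_flatten (s :: t) (fun u hu => h u (List.mem_cons_of_mem _ hu)) hp'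
      have hrr : IsRun01 r := h r (List.mem_cons_self)
      have hss : IsRun01 s := h s (by simp)
      have hsne : s ≠ [] := run_ne_nil hss
      rw [List.flatten_cons, des_append, des_run hrr, head?_flatten_cons s t hsne, ih]
      conv_rhs => rw [List.countP_cons]
      obtain ⟨a, b, hreq, hab⟩ := hrr
      obtain ⟨c, d, hseq, hcd⟩ := hss
      cases b with
      | zero =>
          -- r is all zeros: no descent at junction, r not mixed
          have hlast : r.getLast? = some 0 := by
            rw [run_getLast ⟨a, 0, hreq, hab⟩, if_neg]
            rw [hreq]; simp [List.mem_replicate]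
          have hmix : ¬ mixedb r = true := by
            rw [hreq]; intro hm; exact absurd (mixedb_iff.mp hm).2 (by simp)
          rw [hlast]
          have hh : s.head? = some (if 0 ∈ s then 0 else 1) := run_head ⟨c, d, hseq, hcd⟩
          rw [hh]
          simp only [Bool.not_eq_true] at hmix
          simp [jn, hmix]
      | succ b' =>
          have hlast : r.getLast? = some 1 := by
            rw [run_getLast ⟨a, b' + 1, hreq, hab⟩, if_pos]
            rw [hreq]; simp [List.mem_replicate]
          rw [hlast]
          cases a with
          | zero =>
              -- r is all ones: everything after is all ones
              have hr1 : r.head? = some 1 := by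
                rw [run_head ⟨0, b' + 1, hreq, hab⟩, if_neg]
                rw [hreq]; simp [List.mem_replicate]
              have hall : ∀ u ∈ s :: t, mixedb u = false ∧ u.head? = some 1 := fun u hu =>
                after_one hr1 (h u (List.mem_cons_of_mem _ hu)) (hr u hu)
              have hcnt : (s :: t).countP mixedb = 0 :=
                List.countP_eq_zero.mpr (fun u hu => by simp [(hall u hu).1])
              have hmix : ¬ mixedb r = true := by
                rw [hreq]; intro hm; exact absurd (mixedb_iff.mp hm).1 (by simp)
              rw [hcnt, (hall s (by simp)).2]
              simp only [Bool.not_eq_true] at hmix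
              simp [jn, hmix]
          | succ a' =>
              -- r is mixed
              have hmix : mixedb r = true := by rw [hreq]; exact mixedb_iff.mpr ⟨by simp, by simp⟩
              rw [hmix, if_pos rfl]
              cases c with
              | zero =>
                  -- s is all ones, so everything in t is all ones
                  have hsh1 : s.head? = some 1 := by
                    rw [run_head ⟨0, d, hseq, hcd⟩, if_neg]
                    rw [hseq]; simp [List.mem_replicate]
                  have hall : ∀ u ∈ t, mixedb u = false := fun u hu =>
                    (after_one hsh1 (h u (by simp [hu])) (hs1 u hu)).1
                  have hsmix : mixedb s = false := by
                    rw [Bool.eq_false_iff]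
                    intro hm
                    rw [hseq] at hm
                    exact absurd (mixedb_iff.mp hm).1 (by simp)
                  have hcnt : (s :: t).countP mixedb = 0 :=
                    List.countP_eq_zero.mpr (by
                      intro u hu
                      rcases List.mem_cons.mp hu with rfl | hu
                      · simp [hsmix]
                      · simp [hall u hu])
                  rw [hcnt, hsh1]
                  simp [jn]
              | succ c' =>
                  -- s starts with 0; s must be mixed
                  have hsd : d ≠ 0 := by
                    intro hd
                    subst hd
                    have := hr s (by simp)
                    rw [hreq, hseq] at this
                    simp only [List.replicate_succ (a := 1) (n := b')] at this
                    rw [List.replicate_zero, List.append_nil, lexLe_mixed_zeros] at this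
                    exact Bool.false_ne_true this
                  have hsh : s.head? = some 0 := by
                    rw [run_head ⟨c' + 1, d, hseq, hcd⟩, if_pos]
                    rw [hseq]; simp [List.mem_replicate]
                  have hsmix : mixedb s = true := by
                    rw [hseq]; exact mixedb_iff.mpr ⟨by simp, hsd⟩
                  have hge : 1 ≤ (s :: t).countP mixedb := by
                    rw [List.countP_cons, hsmix]; simp
                  rw [hsh]
                  simp only [jn, if_pos (by omega : (0:ℕ) < 1)]
                  omega

lemma mixedb_false_of {a b : ℕ} (h : a = 0 ∨ b = 0) :
    mixedb (List.replicate a 0 ++ List.replicate b 1) = false := by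
  rw [Bool.eq_false_iff]
  intro hm
  obtain ⟨ha, hb⟩ := mixedb_iff.mp hm
  tauto

lemma occ01_eq_countP : ∀ l : List ℕ, (∀ x ∈ l, x ≤ 1) → occ01 l = (splitRuns l).countP mixedb
  | [], _ => rfl
  | [x], hb => by
      have hx := hb x (by simp)
      rw [occ01_single]
      show 0 = List.countP mixedb [[x]]
      rw [List.countP_cons, List.countP_nil]
      have : mixedb [x] = false := by
        rw [Bool.eq_false_iff]
        intro hm
        simp only [mixedb, decide_eq_true_eq, List.mem_singleton] at hm
        omega
      simp [this]
  | x :: y :: rest, h => by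
      have hbin : ∀ z ∈ y :: rest, z ≤ 1 := fun z hz => h z (List.mem_cons_of_mem _ hz)
      have ih := occ01_eq_countP (y :: rest) hbin
      obtain ⟨r, rs, hsp⟩ := splitRuns_cons y rest
      have hrun : IsRun01 (y :: r) := isRun_splitRuns (y :: rest) hbin _ (by rw [hsp]; simp)
      have hx : x ≤ 1 := h x (by simp)
      have hy : y ≤ 1 := h y (by simp)
      rw [occ01_cons₂, ih, hsp]
      obtain ⟨a, b, hab, hab1⟩ := hrun
      by_cases hxy : x ≤ y
      · rw [show splitRuns (x :: y :: rest) = (x :: y :: r) :: rs by simp [splitRuns, hsp, hxy]]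
        rw [List.countP_cons, List.countP_cons]
        interval_cases x
        · by_cases hy1 : y = 1
          · subst hy1
            have ha : a = 0 := by
              cases a with
              | zero => rfl
              | succ a' => simp [List.replicate_succ] at hab
            subst ha
            simp only [List.replicate_zero, List.nil_append] at hab
            have hb0 : b ≠ 0 := by
              intro hb; subst hb; simp at hab
            have h1 : mixedb (1 :: r) = false := by
              rw [hab, show List.replicate b 1 = List.replicate 0 0 ++ List.replicate b 1 by simp]
              exact mixedb_false_of (Or.inl rfl)
            have h2 : mixedb (0 :: 1 :: r) = true := by
              rw [hab, show (0 : ℕ) :: List.replicate b 1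
                    = List.replicate 1 0 ++ List.replicate b 1 by simp]
              exact mixedb_iff.mpr ⟨one_ne_zero, hb0⟩
            simp [h1, h2, Nat.add_comm]
          · have hy0 : y = 0 := by omega
            subst hy0
            have ha : a ≠ 0 := by
              intro ha0; subst ha0
              simp only [List.replicate_zero, List.nil_append] at hab
              cases b with
              | zero => simp at hab
              | succ b0 => simp [List.replicate_succ] at hab
            have h1 : mixedb (0 :: 0 :: r) = mixedb (0 :: r) := by
              rw [Bool.eq_iff_iff]
              rw [show (0:ℕ) :: 0 :: r = List.replicate (a+1) 0 ++ List.replicate b 1 by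
                    simp [List.replicate_succ, hab]]
              rw [hab, mixedb_iff, mixedb_iff]
              constructor <;> rintro ⟨h1, h2⟩ <;> exact ⟨by omega, h2⟩
            rw [h1]
            simp
        · have hy1 : y = 1 := by omega
          subst hy1
          have ha : a = 0 := by
            cases a with
            | zero => rfl
            | succ a' => simp [List.replicate_succ] at hab
          subst ha
          simp only [List.replicate_zero, List.nil_append] at hab
          have h1 : mixedb (1 :: r) = false := by
            rw [hab, show List.replicate b 1 = List.replicate 0 0 ++ List.replicate b 1 by simp]
            exact mixedb_false_of (Or.inl rfl)
          have h2 : mixedb (1 :: 1 :: r) = false := by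
            rw [hab, show (1:ℕ) :: List.replicate b 1
                  = List.replicate 0 0 ++ List.replicate (b+1) 1 by simp [List.replicate_succ]]
            exact mixedb_false_of (Or.inl rfl)
          simp [h1, h2]
      · rw [show splitRuns (x :: y :: rest) = [x] :: (y :: r) :: rs by simp [splitRuns, hsp, hxy]]
        have hx1 : x = 1 := by omega
        have hy0 : y = 0 := by omega
        subst hx1; subst hy0
        have h1 : mixedb [1] = false := by
          rw [show [(1:ℕ)] = List.replicate 0 0 ++ List.replicate 1 1 by simp]
          exact mixedb_false_of (Or.inl rfl)
        simp [List.countP_cons, h1]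

lemma des_runsort (l : List ℕ) (hl : ∀ x ∈ l, x ≤ 1) : des (runsort l) = occ01 l - 1 := by
  have hperm := List.mergeSort_perm (splitRuns l) lexLe
  have hsorted := List.pairwise_mergeSort (le := lexLe) lexLe_trans lexLe_total (splitRuns l)
  have hruns : ∀ r ∈ (splitRuns l).mergeSort lexLe, IsRun01 r := fun r hr =>
    isRun_splitRuns l hl r (hperm.mem_iff.mp hr)
  rw [show runsort l = ((splitRuns l).mergeSort lexLe).flatten from rfl]
  rw [des_flatten _ hruns hsorted, hperm.countP_eq, ← occ01_eq_countP l hl]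

lemma word_cons {n : ℕ} (x : Fin 2) (v : Fin n → Fin 2) :
    word (Fin.cons x v) = (x : ℕ) :: word v := by
  simp [word, List.ofFn_succ]

lemma word_zero (w : Fin 0 → Fin 2) : word w = [] := by simp [word]

noncomputable def cntA (n k : ℕ) : ℕ :=
  ∑ w : Fin n → Fin 2, if occ01 (word w) = k ∧ (word w).head? ≠ some 1 then 1 else 0

noncomputable def cntB (n k : ℕ) : ℕ :=
  ∑ w : Fin n → Fin 2, if occ01 (word w) = k ∧ (word w).head? = some 1 then 1 else 0

lemma sum_succ {n : ℕ} (f : (Fin (n + 1) → Fin 2) → ℕ) :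
    ∑ w : Fin (n + 1) → Fin 2, f w
      = (∑ v : Fin n → Fin 2, f (Fin.cons 0 v)) + ∑ v : Fin n → Fin 2, f (Fin.cons 1 v) := by
  rw [← Fintype.sum_equiv (Fin.consEquiv fun _ => Fin 2) (fun p => f (Fin.cons p.1 p.2)) f
    (fun p => rfl)]
  rw [Fintype.sum_prod_type, Fin.sum_univ_two]

lemma cntA_zero (k : ℕ) : cntA 0 k = if k = 0 then 1 else 0 := by
  unfold cntA
  have key : ∀ w : Fin 0 → Fin 2,
      (if occ01 (word w) = k ∧ (word w).head? ≠ some 1 then 1 else 0)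
        = if k = 0 then 1 else 0 := by
    intro w
    rw [word_zero w]
    by_cases hk : k = 0 <;> simp [hk, occ01_nil, eq_comm]
  rw [Finset.sum_congr rfl fun w _ => key w, Finset.sum_const]
  simp

lemma cntB_zero (k : ℕ) : cntB 0 k = 0 := by
  unfold cntB
  refine Finset.sum_eq_zero fun w _ => ?_
  rw [word_zero w]
  simp

lemma cntB_succ (n k : ℕ) : cntB (n + 1) k = cntA n k + cntB n k := by
  unfold cntB cntA
  rw [sum_succ]
  have h0 : (∑ v : Fin n → Fin 2,
      if occ01 (word (Fin.cons 0 v)) = k ∧ (word (Fin.cons 0 v)).head? = some 1 then 1 else 0)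
      = 0 := by
    refine Finset.sum_eq_zero fun v _ => ?_
    rw [word_cons]
    simp
  rw [h0, zero_add, ← Finset.sum_add_distrib]
  refine Finset.sum_congr rfl fun v _ => ?_
  rw [word_cons, occ01_cons]
  by_cases h : (word v).head? = some 1 <;> by_cases h2 : occ01 (word v) = k <;>
    simp [h, h2]

lemma cntA_succ_zero (n : ℕ) : cntA (n + 1) 0 = cntA n 0 := by
  unfold cntA
  rw [sum_succ]
  have h1 : (∑ v : Fin n → Fin 2,
      if occ01 (word (Fin.cons 1 v)) = 0 ∧ (word (Fin.cons 1 v)).head? ≠ some 1 then 1 else 0)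
      = 0 := by
    refine Finset.sum_eq_zero fun v _ => ?_
    rw [word_cons]
    simp
  rw [h1, add_zero]
  refine Finset.sum_congr rfl fun v _ => ?_
  rw [word_cons, occ01_cons]
  by_cases h : (word v).head? = some 1 <;> simp [h] <;> omega

lemma cntA_succ (n k : ℕ) : cntA (n + 1) (k + 1) = cntA n (k + 1) + cntB n k := by
  unfold cntA cntB
  rw [sum_succ]
  have h1 : (∑ v : Fin n → Fin 2,
      if occ01 (word (Fin.cons 1 v)) = k + 1 ∧ (word (Fin.cons 1 v)).head? ≠ some 1
      then 1 else 0) = 0 := by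
    refine Finset.sum_eq_zero fun v _ => ?_
    rw [word_cons]
    simp
  rw [h1, add_zero, ← Finset.sum_add_distrib]
  refine Finset.sum_congr rfl fun v _ => ?_
  rw [word_cons, occ01_cons]
  by_cases h : (word v).head? = some 1 <;> by_cases h2 : occ01 (word v) = k <;>
    simp [h, h2] <;> omega

lemma cnt_eq : ∀ n k : ℕ, cntA n k = n.choose (2 * k) ∧ cntB n k = n.choose (2 * k + 1)
  | 0, k => by
      rw [cntA_zero, cntB_zero]
      cases k with
      | zero => simp
      | succ k' =>
          constructor
          · rw [if_neg (by omega), eq_comm, Nat.choose_eq_zero_iff]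
            omega
          · rw [eq_comm, Nat.choose_eq_zero_iff]
            omega
  | n + 1, k => by
      have ih := cnt_eq n
      constructor
      · cases k with
        | zero => rw [cntA_succ_zero, (ih 0).1]; simp
        | succ k' =>
            rw [cntA_succ, (ih (k' + 1)).1, (ih k').2]
            rw [show 2 * (k' + 1) = (2 * k' + 1) + 1 by ring, Nat.choose_succ_succ]
            simp only [Nat.succ_eq_add_one]
            omega
      · rw [cntB_succ, (ih k).1, (ih k).2, Nat.choose_succ_succ]

lemma count_total (n k : ℕ) :
    (Finset.univ.filter fun w : Fin n → Fin 2 => occ01 (word w) = k).card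
      = cntA n k + cntB n k := by
  rw [Finset.card_filter]
  unfold cntA cntB
  rw [← Finset.sum_add_distrib]
  refine Finset.sum_congr rfl fun w _ => ?_
  by_cases h : (word w).head? = some 1 <;> by_cases h2 : occ01 (word w) = k <;> simp [h, h2]


end Aux18

/-- For `k ≥ 2`, a binary word of length `n` has exactly `k-1` descents after run-sorting
iff it has exactly `k` occurrences of `01`, and the number of such words is
`C(n,2k)+C(n,2k+1)`. -/
theorem stmt18 (n k : ℕ) (hk : 2 ≤ k) :
    (∀ w : Fin n → Fin 2, des (runsort (word w)) = k - 1 ↔ occ01 (word w) = k) ∧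
    (Finset.univ.filter fun w : Fin n → Fin 2 =>
      occ01 (word w) = k).card = n.choose (2*k) + n.choose (2*k+1) := by
  constructor
  · intro w
    have hbin : ∀ x ∈ word w, x ≤ 1 := by
      intro x hx
      rw [word, List.mem_ofFn] at hx
      obtain ⟨i, rfl⟩ := hx
      exact Nat.lt_succ_iff.mp (w i).isLt
    have h := des_runsort (word w) hbin
    omega
  · rw [count_total, (cnt_eq n k).1, (cnt_eq n k).2]
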